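/- Transfer-matrix evaluation: the matrix Z_n(x) with entries [Z_n(x)]_{l,r} = Σ_{z_1,...,z_n ∈ F_2} (-1)^(Σ_{i=0}^{n} z_i z_{i+1} + Σ_{i=1}^{n}(1+x_i) z_i), where z_0 = l and z_{n+1} = r, equals 2^{N/2} · H Z^{1+x_1} H Z^{1+x_2} H ⋯ H Z^{1+x_n} H as a 2×2 real matrix, where N = n+1, H is the normalized Hadamard matrix (H² = I) and Z = diag(1,-1). -/

import Mathlib

/-- The normalized Hadamard matrix H = (1/√2)·[[1,1],[1,-1]], indexed by F_2,
with entries H_{ab} = (1/√2)·(-1)^(ab); it satisfies H² = I. -/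
noncomputable def Hmat : Matrix (ZMod 2) (ZMod 2) ℝ :=
  fun a b => (1 / Real.sqrt 2) * (-1 : ℝ) ^ (a * b).val

/-- The Pauli Z matrix diag(1,-1), indexed by F_2. -/
def Zmat : Matrix (ZMod 2) (ZMod 2) ℝ :=
  fun a b => if a = b then (-1 : ℝ) ^ a.val else 0

/-- The transfer-matrix partition function: [Z_n(x)]_{l,r} =
Σ_{z₁,…,z_n ∈ F_2} (-1)^(Σ_{i=0}^n z_i z_{i+1} + Σ_{i=1}^n (1+x_i) z_i),
with boundary conditions z₀ = l and z_{n+1} = r. -/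
def Zpart (n : ℕ) (x : Fin n → ZMod 2) : Matrix (ZMod 2) (ZMod 2) ℝ :=
  fun l r =>
    ∑ z : Fin n → ZMod 2,
      (-1 : ℝ) ^
        ((((∑ i ∈ (Finset.range (n + 1)).attach,
            (fun j : Fin (n + 2) =>
              if h0 : j.val = 0 then l else if h1 : j.val = n + 1 then r
              else z ⟨j.val - 1, by have := j.isLt; omega⟩)
              ⟨i.1, by have := Finset.mem_range.mp i.2; omega⟩ *
            (fun j : Fin (n + 2) =>
              if h0 : j.val = 0 then l else if h1 : j.val = n + 1 then r
              else z ⟨j.val - 1, by have := j.isLt; omega⟩)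
              ⟨i.1 + 1, by have := Finset.mem_range.mp i.2; omega⟩) +
          ∑ i : Fin n, (1 + x i) * z i) : ZMod 2).val)

lemma sum_zmod2 (f : ZMod 2 → ℝ) : ∑ t : ZMod 2, f t = f 0 + f 1 :=
  Fin.sum_univ_two f

lemma zmod2_cases (a : ZMod 2) : a = 0 ∨ a = 1 := by revert a; decide

lemma neg_one_pow_add (a b : ZMod 2) :
    ((-1:ℝ))^((a+b).val) = (-1)^a.val * (-1)^b.val := by
  rcases zmod2_cases a with h|h <;> rcases zmod2_cases b with h'|h' <;>
    subst h <;> subst h' <;>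
    norm_num [show ((1:ZMod 2)+1).val = 0 by decide, show ((2:ZMod 2)).val = 0 by decide,
      show ((0:ZMod 2)+0).val = 0 by decide,
      show ((0:ZMod 2)+1).val = 1 by decide, show ((1:ZMod 2)+0).val = 1 by decide,
      show ((0:ZMod 2)).val = 0 by decide, show ((1:ZMod 2)).val = 1 by decide]

lemma neg_one_pow_mul (a b : ZMod 2) :
    ((-1:ℝ))^((a*b).val) = (-1)^(a.val * b.val) := by
  rcases zmod2_cases a with h|h <;> rcases zmod2_cases b with h'|h' <;>
    subst h <;> subst h' <;>
    norm_num [show ((1:ZMod 2)*1).val = 1 by decide, show ((0:ZMod 2)*0).val = 0 by decide,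
      show ((0:ZMod 2)*1).val = 0 by decide, show ((1:ZMod 2)*0).val = 0 by decide,
      show ((0:ZMod 2)).val = 0 by decide, show ((1:ZMod 2)).val = 1 by decide]

lemma Zpow_apply (c : ℕ) (a b : ZMod 2) :
    (Zmat ^ c) a b = if a = b then (-1:ℝ)^(c * a.val) else 0 := by
  induction c with
  | zero => simp [Matrix.one_apply]
  | succ c ih =>
    rw [pow_succ, Matrix.mul_apply, sum_zmod2]
    rcases zmod2_cases a with h|h <;> rcases zmod2_cases b with h'|h' <;>
      subst h <;> subst h' <;>
      simp [ih, Zmat, pow_succ, mul_add, pow_add,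
        show ((0:ZMod 2)).val = 0 by decide, show ((1:ZMod 2)).val = 1 by decide]

lemma Zpow_mul_apply (c : ℕ) (M : Matrix (ZMod 2) (ZMod 2) ℝ) (a b : ZMod 2) :
    (Zmat ^ c * M) a b = (-1:ℝ)^(c * a.val) * M a b := by
  rw [Matrix.mul_apply, sum_zmod2]
  rcases zmod2_cases a with h|h <;> subst h <;>
    simp [Zpow_apply, show ((0:ZMod 2) = 1) = False by simp, eq_comm]

lemma exponent_split (n : ℕ) (l t r : ZMod 2) (z : Fin n → ZMod 2) (x : Fin (n+1) → ZMod 2) :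
    ((∑ i : Fin (n+2),
        (Fin.cons l (Fin.snoc (Fin.cons t z) r) : Fin (n+3) → ZMod 2) i.castSucc *
        (Fin.cons l (Fin.snoc (Fin.cons t z) r) : Fin (n+3) → ZMod 2) i.succ) +
      ∑ i : Fin (n+1), (1 + x i) * (Fin.cons t z : Fin (n+1) → ZMod 2) i : ZMod 2)
    = (l * t + (1 + x 0) * t) +
      ((∑ i : Fin (n+1),
        (Fin.cons t (Fin.snoc z r) : Fin (n+2) → ZMod 2) i.castSucc *
        (Fin.cons t (Fin.snoc z r) : Fin (n+2) → ZMod 2) i.succ) +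
      ∑ i : Fin n, (1 + x i.succ) * z i) := by
  rw [← Fin.cons_snoc_eq_snoc_cons]
  have h1 : (∑ i : Fin (n+2),
      (Fin.cons l (Fin.cons t (Fin.snoc z r)) : Fin (n+3) → ZMod 2) i.castSucc *
      (Fin.cons l (Fin.cons t (Fin.snoc z r)) : Fin (n+3) → ZMod 2) i.succ)
      = l * t + ∑ i : Fin (n+1),
        (Fin.cons t (Fin.snoc z r) : Fin (n+2) → ZMod 2) i.castSucc *
        (Fin.cons t (Fin.snoc z r) : Fin (n+2) → ZMod 2) i.succ := by
    rw [Fin.sum_univ_succ]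
    simp only [Fin.castSucc_zero, Fin.cons_zero, ← Fin.succ_castSucc, Fin.cons_succ]
  have h2 : (∑ i : Fin (n+1), (1 + x i) * (Fin.cons t z : Fin (n+1) → ZMod 2) i)
      = (1 + x 0) * t + ∑ i : Fin n, (1 + x i.succ) * z i := by
    rw [Fin.sum_univ_succ]
    simp only [Fin.cons_zero, Fin.cons_succ]
  rw [h1, h2]; ring

lemma key (n : ℕ) (x : Fin n → ZMod 2) (l r : ZMod 2) :
    (∑ z : Fin n → ZMod 2, (-1:ℝ) ^
      (((∑ i : Fin (n+1), (Fin.cons l (Fin.snoc z r) : Fin (n+2) → ZMod 2) i.castSucc *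
        (Fin.cons l (Fin.snoc z r) : Fin (n+2) → ZMod 2) i.succ) +
        ∑ i : Fin n, (1 + x i) * z i : ZMod 2).val))
    = (Real.sqrt 2) ^ (n+1) *
      (Hmat * (List.ofFn fun i : Fin n => Zmat ^ ((1:ZMod 2)+x i).val * Hmat).prod) l r := by
  induction n generalizing l with
  | zero => simp [Hmat, Fin.sum_univ_succ, Fin.snoc]
  | succ n ih =>
    rw [← Fintype.sum_equiv (Fin.consEquiv fun _ : Fin (n+1) => ZMod 2)
      (fun p => (-1:ℝ) ^
        (((∑ i : Fin (n+2),
            (Fin.cons l (Fin.snoc (Fin.cons p.1 p.2) r) : Fin (n+3) → ZMod 2) i.castSucc *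
            (Fin.cons l (Fin.snoc (Fin.cons p.1 p.2) r) : Fin (n+3) → ZMod 2) i.succ) +
          ∑ i : Fin (n+1), (1 + x i) * (Fin.cons p.1 p.2 : Fin (n+1) → ZMod 2) i : ZMod 2).val))
      _ (fun p => rfl)]
    rw [Fintype.sum_prod_type]
    have hstep : ∀ t : ZMod 2,
        (∑ z : Fin n → ZMod 2, (-1:ℝ) ^
          (((∑ i : Fin (n+2),
              (Fin.cons l (Fin.snoc (Fin.cons t z) r) : Fin (n+3) → ZMod 2) i.castSucc *
              (Fin.cons l (Fin.snoc (Fin.cons t z) r) : Fin (n+3) → ZMod 2) i.succ) +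
            ∑ i : Fin (n+1), (1 + x i) * (Fin.cons t z : Fin (n+1) → ZMod 2) i : ZMod 2).val))
        = (-1:ℝ)^((l*t).val) * ((-1:ℝ)^(((1+x 0)*t).val) *
            ((Real.sqrt 2) ^ (n+1) *
              (Hmat * (List.ofFn fun i : Fin n =>
                Zmat ^ ((1:ZMod 2)+x i.succ).val * Hmat).prod) t r)) := by
      intro t
      rw [← ih (fun i => x i.succ) t]
      rw [Finset.sum_congr rfl fun z (_ : z ∈ Finset.univ) =>
        (by rw [exponent_split, neg_one_pow_add, neg_one_pow_add, mul_assoc] :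
          ((-1:ℝ) ^
          (((∑ i : Fin (n+2),
              (Fin.cons l (Fin.snoc (Fin.cons t z) r) : Fin (n+3) → ZMod 2) i.castSucc *
              (Fin.cons l (Fin.snoc (Fin.cons t z) r) : Fin (n+3) → ZMod 2) i.succ) +
            ∑ i : Fin (n+1), (1 + x i) * (Fin.cons t z : Fin (n+1) → ZMod 2) i : ZMod 2).val))
          = (-1:ℝ)^((l*t).val) * ((-1:ℝ)^(((1+x 0)*t).val) * (-1:ℝ) ^
            (((∑ i : Fin (n+1),
              (Fin.cons t (Fin.snoc z r) : Fin (n+2) → ZMod 2) i.castSucc *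
              (Fin.cons t (Fin.snoc z r) : Fin (n+2) → ZMod 2) i.succ) +
            ∑ i : Fin n, (1 + x i.succ) * z i : ZMod 2).val)))]
      rw [← Finset.mul_sum, ← Finset.mul_sum]
    simp only [hstep]
    rw [List.ofFn_succ, List.prod_cons, Matrix.mul_apply, sum_zmod2, sum_zmod2]
    have hent : ∀ t : ZMod 2,
        Hmat l t * ((Zmat ^ ((1:ZMod 2) + x 0).val * Hmat) *
          (List.ofFn fun i : Fin n => Zmat ^ ((1:ZMod 2)+x i.succ).val * Hmat).prod) t r
        = Hmat l t * ((-1:ℝ)^(((1:ZMod 2) + x 0).val * t.val) *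
          (Hmat * (List.ofFn fun i : Fin n => Zmat ^ ((1:ZMod 2)+x i.succ).val * Hmat).prod) t r) := by
      intro t
      rw [Matrix.mul_assoc, Zpow_mul_apply]
    rw [hent, hent]
    have hsqrt : (1 / Real.sqrt 2) * Real.sqrt 2 = 1 := by
      rw [one_div, inv_mul_cancel₀ (by positivity : Real.sqrt 2 ≠ 0)]
    have hfin : ∀ t : ZMod 2,
        (-1:ℝ)^((l*t).val) * ((-1:ℝ)^(((1+x 0)*t).val) *
            ((Real.sqrt 2) ^ (n+1) *
              (Hmat * (List.ofFn fun i : Fin n =>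
                Zmat ^ ((1:ZMod 2)+x i.succ).val * Hmat).prod) t r))
        = (Real.sqrt 2) ^ (n+2) *
          (Hmat l t * ((-1:ℝ)^(((1:ZMod 2) + x 0).val * t.val) *
            (Hmat * (List.ofFn fun i : Fin n =>
              Zmat ^ ((1:ZMod 2)+x i.succ).val * Hmat).prod) t r)) := by
      intro t
      have hne : Real.sqrt 2 ≠ 0 := by positivity
      rw [neg_one_pow_mul (1 + x 0) t]
      generalize (Hmat * (List.ofFn fun i : Fin n =>
        Zmat ^ ((1:ZMod 2)+x i.succ).val * Hmat).prod) t r = Q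
      simp only [Hmat]
      field_simp
      ring
    rw [hfin, hfin, mul_add]

lemma bc_fun_eq (n : ℕ) (l r : ZMod 2) (z : Fin n → ZMod 2) :
    (fun j : Fin (n + 2) =>
      if h0 : j.val = 0 then l else if h1 : j.val = n + 1 then r
      else z ⟨j.val - 1, by have := j.isLt; omega⟩)
    = (Fin.cons l (Fin.snoc z r) : Fin (n+2) → ZMod 2) := by
  funext j
  rcases j with ⟨jv, hj⟩
  match jv with
  | 0 => simp
  | (jv+1) =>
    have he : (⟨jv+1, hj⟩ : Fin (n+2)) = Fin.succ ⟨jv, by omega⟩ := rfl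
    rw [he, Fin.cons_succ]
    simp only [Fin.snoc, Fin.succ]
    by_cases h : jv + 1 = n + 1
    · have : ¬ (jv < n) := by omega
      simp [h, this]
    · have hlt : jv < n := by omega
      simp [h, hlt, Nat.ne_of_lt hlt]

lemma attach_sum_eq (n : ℕ) (w : Fin (n+2) → ZMod 2) :
    (∑ i ∈ (Finset.range (n + 1)).attach,
      w ⟨i.1, by have := Finset.mem_range.mp i.2; omega⟩ *
      w ⟨i.1 + 1, by have := Finset.mem_range.mp i.2; omega⟩)
    = ∑ i : Fin (n+1), w i.castSucc * w i.succ := by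
  rw [show (Finset.range (n+1)).attach = Finset.univ from rfl]
  refine Fintype.sum_bijective (fun i => (⟨i.1, Finset.mem_range.mp i.2⟩ : Fin (n+1))) ?_ _ _ ?_
  · constructor
    · intro a b hab
      apply Subtype.ext
      exact congrArg Fin.val hab
    · intro b
      exact ⟨⟨b.1, Finset.mem_range.mpr b.2⟩, rfl⟩
  · intro i
    congr 1

/-- transfer-matrix evaluation:
Z_n(x) = 2^{N/2} · H Z^{1+x₁} H Z^{1+x₂} H ⋯ H Z^{1+x_n} H, with N = n+1. -/
theorem transfer_matrix_evaluation (n : ℕ) (x : Fin n → ZMod 2) :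
    Zpart n x =
      (Real.sqrt 2) ^ (n + 1) •
        (Hmat * (List.ofFn fun i : Fin n => Zmat ^ ((1 : ZMod 2) + x i).val * Hmat).prod) := by
  ext l r
  rw [Matrix.smul_apply, smul_eq_mul, ← key n x l r]
  show (∑ z : Fin n → ZMod 2, _) = _
  refine Finset.sum_congr rfl fun z _ => ?_
  congr 2
  rw [bc_fun_eq n l r z]
  congr 1
  exact attach_sum_eq n (Fin.cons l (Fin.snoc z r))
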